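/- (Theorem 1: Distributed Algorithm Rate of Convergence.) Let ρ > 0. Let A ∈ ℝ^{n×n}, B ∈ ℝ^{n×n_u}, C_y ∈ ℝ^{n_y×n}, filter matrices A_Ψ ∈ ℝ^{n_ψ×n_ψ}, B_Ψ^y ∈ ℝ^{n_ψ×n_y}, B_Ψ^u ∈ ℝ^{n_ψ×n_u}, C_Ψ ∈ ℝ^{n_z×n_ψ}, D_Ψ^y ∈ ℝ^{n_z×n_y}, D_Ψ^u ∈ ℝ^{n_z×n_u}, a symmetric matrix M ∈ ℝ^{n_z×n_z}, and F_ξ ∈ ℝ^{n_F×n}, F_u ∈ ℝ^{n_F×n_u}. Suppose sequences ξ^t ∈ ℝ^n, u^t ∈ ℝ^{n_u}, ψ^t ∈ ℝ^{n_ψ}, z^t ∈ ℝ^{n_z} and vectors ξ*, u*, ψ*, z* satisfy, with y^t = C_y ξ^t and y* = C_y ξ*: (i) ξ^{t+1} = Aξ^t + Bu^t for all t; (ii) ψ^{t+1} = A_Ψψ^t + B_Ψ^y y^t + B_Ψ^u u^t with ψ^0 = ψ*, and z^t = C_Ψψ^t + D_Ψ^y y^t + D_Ψ^u u^t; (iii)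 the fixed-point relations ξ* = Aξ* + Bu*, ψ* = A_Ψψ* + B_Ψ^y y* + B_Ψ^u u*, z* = C_Ψψ* + D_Ψ^y y* + D_Ψ^u u*; (iv) the invariant F_ξξ^t + F_u u^t = 0 for all t and F_ξξ* + F_u u* = 0; (v) the ρ-hard IQC: Σ_{t=0}^{T} ρ^{−2t}(z^t − z*)ᵀM(z^t − z*) ≥ 0 for every T ∈ ℕ. Define the extended matrices Â = [[A, 0],[B_Ψ^y C_y, A_Ψ]], B̂ = [B; B_Ψ^u], Ĉ = [D_Ψ^y C_y, C_Ψ], D̂ = D_Ψ^u, and write ξ̂^t = (ξ^t, ψ^t), ξ̂* = (ξ*, ψ*). If there exist a symmetric positive definite P ∈ ℝ^{(n+n_ψ)×(n+n_ψ)} and λ ≥ 0 such that for every triple (v_ξ, v_ψ, v_u) with F_ξ v_ξ + F_u v_u = 0, writing ṽ = (v_ξ, v_ψ): (Âṽ + B̂v_u)ᵀP(Âṽ + B̂v_u) − ρ²·ṽᵀPṽ + λ·(Ĉṽ + D̂v_u)ᵀM(Ĉṽ + D̂v_u) ≤ 0, then for all t ∈ ℕ: ‖ξ^t − ξ*‖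 ≤ √(λ_max(P)/λ_min(P)) · ρ^t · ‖ξ̂^0 − ξ̂*‖, where λ_min(P) and λ_max(P) are the smallest and largest eigenvalues of P. -/

import Mathlib

open Matrix Finset

lemma rayleigh_bounds {m : Type*} [Fintype m] [DecidableEq m] [Nonempty m]
    {P : Matrix m m ℝ} (hP : P.IsHermitian) (x : m → ℝ) :
    (⨅ i, hP.eigenvalues i) * (x ⬝ᵥ x) ≤ x ⬝ᵥ P.mulVec x ∧
    x ⬝ᵥ P.mulVec x ≤ (⨆ i, hP.eigenvalues i) * (x ⬝ᵥ x) := by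
  set U : Matrix m m ℝ := (hP.eigenvectorUnitary : Matrix m m ℝ) with hU
  set y : m → ℝ := star U *ᵥ x with hy
  have hUU : U * star U = 1 := mem_unitaryGroup_iff.mp hP.eigenvectorUnitary.2
  have hstarU : star U = Uᵀ := by
    rw [Matrix.star_eq_conjTranspose, conjTranspose_eq_transpose_of_trivial]
  have hyy : y ⬝ᵥ y = x ⬝ᵥ x := by
    rw [hy, hstarU, mulVec_transpose, ← dotProduct_mulVec, ← mulVec_transpose, mulVec_mulVec,
      ← hstarU, hUU, one_mulVec]
  have hquad : x ⬝ᵥ P.mulVec x = ∑ i, hP.eigenvalues i * (y i * y i) := by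
    conv_lhs => rw [hP.spectral_theorem, Unitary.conjStarAlgAut_apply]
    rw [← mulVec_mulVec, ← mulVec_mulVec, dotProduct_mulVec, ← mulVec_transpose, ← hstarU, ← hy]
    simp [mulVec_diagonal, dotProduct, mul_comm, mul_assoc, mul_left_comm]
  constructor
  · rw [hquad, ← hyy, dotProduct, Finset.mul_sum]
    exact Finset.sum_le_sum fun i _ =>
      mul_le_mul_of_nonneg_right (ciInf_le (Set.Finite.bddBelow (Set.finite_range _)) i)
        (mul_self_nonneg _)
  · rw [hquad, ← hyy, dotProduct, Finset.mul_sum]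
    exact Finset.sum_le_sum fun i _ =>
      mul_le_mul_of_nonneg_right (le_ciSup (Set.Finite.bddAbove (Set.finite_range _)) i)
        (mul_self_nonneg _)

/-- **Theorem 1 (Distributed Algorithm Rate of Convergence).**
Consider the algorithm `ξ^{t+1} = A ξ^t + B u^t`, `y^t = C_y ξ^t`, with invariant
`F_ξ ξ^t + F_u u^t = 0`, fixed point `(ξ*, u*, ψ*, z*)`, and IQC filter `Ψ` (state
`ψ`, output `z`) initialized at its fixed point, whose output satisfies the
`ρ`-hard IQC for the symmetric multiplier `M`. If there exist a positive definite
`P` and `λ ≥ 0` such that the quadratic-form LMI holds on the nullspace of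
`[F_ξ, 0, F_u]`, then `‖ξ^t − ξ*‖ ≤ √(λ_max(P)/λ_min(P)) · ρ^t · ‖ξ̂^0 − ξ̂*‖`. -/
theorem distributed_rate_of_convergence
    {n n_u n_y n_ψ n_z n_F : ℕ} (ρ : ℝ) (hρ : 0 < ρ)
    (A : Matrix (Fin n) (Fin n) ℝ) (B : Matrix (Fin n) (Fin n_u) ℝ)
    (Cy : Matrix (Fin n_y) (Fin n) ℝ)
    (AΨ : Matrix (Fin n_ψ) (Fin n_ψ) ℝ)
    (BΨy : Matrix (Fin n_ψ) (Fin n_y) ℝ) (BΨu : Matrix (Fin n_ψ) (Fin n_u) ℝ)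
    (CΨ : Matrix (Fin n_z) (Fin n_ψ) ℝ)
    (DΨy : Matrix (Fin n_z) (Fin n_y) ℝ) (DΨu : Matrix (Fin n_z) (Fin n_u) ℝ)
    (M : Matrix (Fin n_z) (Fin n_z) ℝ) (hM : M.IsHermitian)
    (Fξ : Matrix (Fin n_F) (Fin n) ℝ) (Fu : Matrix (Fin n_F) (Fin n_u) ℝ)
    -- trajectories and fixed point
    (ξ : ℕ → Fin n → ℝ) (u : ℕ → Fin n_u → ℝ)
    (ψ : ℕ → Fin n_ψ → ℝ) (z : ℕ → Fin n_z → ℝ)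
    (ξs : Fin n → ℝ) (us : Fin n_u → ℝ) (ψs : Fin n_ψ → ℝ) (zs : Fin n_z → ℝ)
    -- (i) algorithm dynamics
    (hξ : ∀ t, ξ (t + 1) = A.mulVec (ξ t) + B.mulVec (u t))
    -- (ii) IQC filter dynamics, initialized at the fixed point
    (hψ0 : ψ 0 = ψs)
    (hψ : ∀ t, ψ (t + 1) =
      AΨ.mulVec (ψ t) + BΨy.mulVec (Cy.mulVec (ξ t)) + BΨu.mulVec (u t))
    (hz : ∀ t, z t =
      CΨ.mulVec (ψ t) + DΨy.mulVec (Cy.mulVec (ξ t)) + DΨu.mulVec (u t))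
    -- (iii) fixed-point relations
    (hξs : ξs = A.mulVec ξs + B.mulVec us)
    (hψs : ψs = AΨ.mulVec ψs + BΨy.mulVec (Cy.mulVec ξs) + BΨu.mulVec us)
    (hzs : zs = CΨ.mulVec ψs + DΨy.mulVec (Cy.mulVec ξs) + DΨu.mulVec us)
    -- (iv) invariant
    (hinv : ∀ t, Fξ.mulVec (ξ t) + Fu.mulVec (u t) = 0)
    (hinvs : Fξ.mulVec ξs + Fu.mulVec us = 0)
    -- (v) ρ-hard IQC
    (hIQC : ∀ T : ℕ, 0 ≤ ∑ t ∈ Finset.range (T + 1),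
      (ρ ^ (2 * t))⁻¹ * ((z t - zs) ⬝ᵥ M.mulVec (z t - zs)))
    -- LMI certificate
    (P : Matrix (Fin n ⊕ Fin n_ψ) (Fin n ⊕ Fin n_ψ) ℝ) (hP : P.PosDef)
    (lam : ℝ) (hlam : 0 ≤ lam)
    (hLMI : ∀ (vξ : Fin n → ℝ) (vψ : Fin n_ψ → ℝ) (vu : Fin n_u → ℝ),
      Fξ.mulVec vξ + Fu.mulVec vu = 0 →
      letI Ahat : Matrix (Fin n ⊕ Fin n_ψ) (Fin n ⊕ Fin n_ψ) ℝ :=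
        Matrix.fromBlocks A 0 (BΨy * Cy) AΨ
      letI Bhat : Matrix (Fin n ⊕ Fin n_ψ) (Fin n_u) ℝ := Matrix.fromRows B BΨu
      letI Chat : Matrix (Fin n_z) (Fin n ⊕ Fin n_ψ) ℝ :=
        Matrix.fromCols (DΨy * Cy) CΨ
      letI v : (Fin n ⊕ Fin n_ψ) → ℝ := Sum.elim vξ vψ
      letI vnext : (Fin n ⊕ Fin n_ψ) → ℝ := Ahat.mulVec v + Bhat.mulVec vu
      letI zv : Fin n_z → ℝ := Chat.mulVec v + DΨu.mulVec vu
      vnext ⬝ᵥ P.mulVec vnext - ρ ^ 2 * (v ⬝ᵥ P.mulVec v)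
        + lam * (zv ⬝ᵥ M.mulVec zv) ≤ 0) :
    ∀ t : ℕ,
      Real.sqrt (∑ i, (ξ t i - ξs i) ^ 2) ≤
        Real.sqrt ((⨆ i, hP.1.eigenvalues i) / (⨅ i, hP.1.eigenvalues i)) * ρ ^ t *
          Real.sqrt (∑ j, (Sum.elim (ξ 0) (ψ 0) j - Sum.elim ξs ψs j) ^ 2) := by
  set Ahat : Matrix (Fin n ⊕ Fin n_ψ) (Fin n ⊕ Fin n_ψ) ℝ :=
    Matrix.fromBlocks A 0 (BΨy * Cy) AΨ with hAhat
  set Bhat : Matrix (Fin n ⊕ Fin n_ψ) (Fin n_u) ℝ := Matrix.fromRows B BΨu with hBhat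
  set Chat : Matrix (Fin n_z) (Fin n ⊕ Fin n_ψ) ℝ :=
    Matrix.fromCols (DΨy * Cy) CΨ with hChat
  set e : ℕ → (Fin n ⊕ Fin n_ψ) → ℝ :=
    fun t => Sum.elim (ξ t - ξs) (ψ t - ψs) with he_def
  set V : ℕ → ℝ := fun t => e t ⬝ᵥ P.mulVec (e t) with hV_def
  set q : ℕ → ℝ := fun t => (z t - zs) ⬝ᵥ M.mulVec (z t - zs) with hq_def
  -- error dynamics
  have h1 : ∀ t, ξ (t + 1) - ξs = A *ᵥ (ξ t - ξs) + B *ᵥ (u t - us) := by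
    intro t
    rw [hξ t, mulVec_sub, mulVec_sub]
    conv_lhs => rw [hξs]
    abel
  have h2 : ∀ t, ψ (t + 1) - ψs =
      (BΨy * Cy) *ᵥ (ξ t - ξs) + AΨ *ᵥ (ψ t - ψs) + BΨu *ᵥ (u t - us) := by
    intro t
    rw [hψ t, mulVec_sub, mulVec_sub, mulVec_sub, ← mulVec_mulVec, ← mulVec_mulVec]
    conv_lhs => rw [hψs]
    abel
  have he : ∀ t, e (t + 1) = Ahat *ᵥ e t + Bhat *ᵥ (u t - us) := by
    intro t
    show Sum.elim (ξ (t+1) - ξs) (ψ (t+1) - ψs) = _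
    rw [h1 t, h2 t, hAhat, hBhat, fromBlocks_mulVec, fromRows_mulVec]
    funext j
    cases j <;> simp [he_def] <;> ring
  have hz' : ∀ t, z t - zs = Chat *ᵥ e t + DΨu *ᵥ (u t - us) := by
    intro t
    rw [he_def, hChat]
    simp only [fromCols_mulVec_sumElim]
    rw [hz t, mulVec_sub, mulVec_sub, mulVec_sub, ← mulVec_mulVec, ← mulVec_mulVec]
    conv_lhs => rw [hzs]
    abel
  -- one-step inequality
  have hstep : ∀ t, V (t + 1) + lam * q t ≤ ρ ^ 2 * V t := by
    intro t
    have hc : Fξ *ᵥ (ξ t - ξs) + Fu *ᵥ (u t - us) = 0 := by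
      rw [mulVec_sub, mulVec_sub]
      have : Fξ *ᵥ ξ t - Fξ *ᵥ ξs + (Fu *ᵥ u t - Fu *ᵥ us)
          = (Fξ *ᵥ ξ t + Fu *ᵥ u t) - (Fξ *ᵥ ξs + Fu *ᵥ us) := by abel
      rw [this, hinv t, hinvs, sub_zero]
    have h := hLMI (ξ t - ξs) (ψ t - ψs) (u t - us) hc
    have hv : Sum.elim (ξ t - ξs) (ψ t - ψs) = e t := rfl
    rw [hv, ← he t, ← hz' t] at h
    have hVt : e (t+1) ⬝ᵥ P.mulVec (e (t+1)) = V (t+1) := rfl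
    have hq' : (z t - zs) ⬝ᵥ M.mulVec (z t - zs) = q t := rfl
    rw [hVt, hq'] at h
    have : e t ⬝ᵥ P.mulVec (e t) = V t := rfl
    rw [this] at h
    linarith
  -- summed inequality
  have hSig : ∀ T, 0 ≤ ∑ t ∈ Finset.range T, (ρ ^ (2 * t))⁻¹ * q t := by
    intro T
    cases T with
    | zero => simp
    | succ T => exact hIQC T
  have hsum : ∀ T, (ρ ^ (2 * T))⁻¹ * V T
      + lam * (ρ ^ 2)⁻¹ * ∑ t ∈ Finset.range T, (ρ ^ (2 * t))⁻¹ * q t ≤ V 0 := by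
    intro T
    induction T with
    | zero => simp
    | succ T IH =>
      have hpT : (0:ℝ) < ρ ^ (2 * T) := pow_pos hρ _
      have hρ2 : (0:ℝ) < ρ ^ 2 := pow_pos hρ _
      have hpow : (ρ ^ (2 * (T + 1)))⁻¹ = (ρ ^ (2 * T))⁻¹ * (ρ ^ 2)⁻¹ := by
        rw [← mul_inv, ← pow_add]; ring_nf
      rw [Finset.sum_range_succ, hpow]
      have key : (ρ ^ (2 * T))⁻¹ * (ρ ^ 2)⁻¹ * (V (T + 1) + lam * q T)
          ≤ (ρ ^ (2 * T))⁻¹ * (ρ ^ 2)⁻¹ * (ρ ^ 2 * V T) :=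
        mul_le_mul_of_nonneg_left (hstep T) (by positivity)
      have heq : (ρ ^ (2 * T))⁻¹ * (ρ ^ 2)⁻¹ * (ρ ^ 2 * V T) = (ρ ^ (2 * T))⁻¹ * V T := by
        field_simp
      rw [heq] at key
      nlinarith [key, IH]
  have hVle : ∀ T, V T ≤ ρ ^ (2 * T) * V 0 := by
    intro T
    have hpT : (0:ℝ) < ρ ^ (2 * T) := pow_pos hρ _
    have hρ2 : (0:ℝ) < ρ ^ 2 := pow_pos hρ _
    have h := hsum T
    have hnn : 0 ≤ lam * (ρ ^ 2)⁻¹ * ∑ t ∈ Finset.range T, (ρ ^ (2 * t))⁻¹ * q t := by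
      have := hSig T
      positivity
    have : (ρ ^ (2 * T))⁻¹ * V T ≤ V 0 := by linarith
    calc V T = ρ ^ (2 * T) * ((ρ ^ (2 * T))⁻¹ * V T) := by field_simp
    _ ≤ ρ ^ (2 * T) * V 0 := mul_le_mul_of_nonneg_left this hpT.le
  -- conclude
  intro t
  rcases Nat.eq_zero_or_pos n with hn | hn
  · haveI : IsEmpty (Fin n) := by rw [hn]; infer_instance
    rw [Finset.univ_eq_empty, Finset.sum_empty, Real.sqrt_zero]
    positivity
  · haveI : Nonempty (Fin n ⊕ Fin n_ψ) := ⟨Sum.inl ⟨0, hn⟩⟩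
    set μ : ℝ := ⨅ i, hP.1.eigenvalues i with hμ_def
    set K : ℝ := ⨆ i, hP.1.eigenvalues i with hK_def
    obtain ⟨i0, hi0⟩ := Finite.exists_min (fun i => hP.1.eigenvalues i)
    have hμpos : 0 < μ :=
      lt_of_lt_of_le (hP.eigenvalues_pos i0) (le_ciInf hi0)
    have hKpos : 0 < K :=
      lt_of_lt_of_le (hP.eigenvalues_pos i0)
        (le_ciSup (Set.Finite.bddAbove (Set.finite_range _)) i0)
    have hray_t := (rayleigh_bounds hP.1 (e t)).1
    have hray_0 := (rayleigh_bounds hP.1 (e 0)).2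
    have hleft : ∑ i, (ξ t i - ξs i) ^ 2 ≤ e t ⬝ᵥ e t := by
      rw [dotProduct, Fintype.sum_sum_type]
      have : ∑ i, e t (Sum.inl i) * e t (Sum.inl i) = ∑ i, (ξ t i - ξs i) ^ 2 := by
        apply Finset.sum_congr rfl
        intro i _
        simp [he_def, sq]
      rw [this]
      have : 0 ≤ ∑ i, e t (Sum.inr i) * e t (Sum.inr i) :=
        Finset.sum_nonneg fun i _ => mul_self_nonneg _
      linarith
    have hright : e 0 ⬝ᵥ e 0 = ∑ j, (Sum.elim (ξ 0) (ψ 0) j - Sum.elim ξs ψs j) ^ 2 := by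
      rw [dotProduct]
      apply Finset.sum_congr rfl
      intro j _
      cases j <;> simp [he_def, sq]
    set S0 : ℝ := ∑ j, (Sum.elim (ξ 0) (ψ 0) j - Sum.elim ξs ψs j) ^ 2 with hS0
    have hS0nn : 0 ≤ S0 := Finset.sum_nonneg fun j _ => sq_nonneg _
    have hpow2 : ρ ^ (2 * t) = (ρ ^ t) ^ 2 := by rw [mul_comm, pow_mul]
    have key : μ * (∑ i, (ξ t i - ξs i) ^ 2) ≤ K * ((ρ ^ t) ^ 2 * S0) := by
      have c1 : μ * (∑ i, (ξ t i - ξs i) ^ 2) ≤ μ * (e t ⬝ᵥ e t) :=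
        mul_le_mul_of_nonneg_left hleft hμpos.le
      have c2 : μ * (e t ⬝ᵥ e t) ≤ V t := hray_t
      have c3 : V t ≤ ρ ^ (2 * t) * V 0 := hVle t
      have c4 : V 0 ≤ K * (e 0 ⬝ᵥ e 0) := hray_0
      have c5 : ρ ^ (2 * t) * V 0 ≤ ρ ^ (2 * t) * (K * (e 0 ⬝ᵥ e 0)) :=
        mul_le_mul_of_nonneg_left c4 (pow_pos hρ _).le
      rw [hright] at c5
      rw [hpow2] at c5
      rw [hpow2] at c3
      linarith [c1, c2, c3, c5]
    have hgoal : ∑ i, (ξ t i - ξs i) ^ 2 ≤ K / μ * ((ρ ^ t) ^ 2 * S0) := by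
      rw [div_mul_eq_mul_div, le_div_iff₀ hμpos, mul_comm]
      exact key
    calc Real.sqrt (∑ i, (ξ t i - ξs i) ^ 2)
        ≤ Real.sqrt (K / μ * ((ρ ^ t) ^ 2 * S0)) := Real.sqrt_le_sqrt hgoal
      _ = Real.sqrt (K / μ) * ρ ^ t * Real.sqrt S0 := by
          rw [Real.sqrt_mul (by positivity), Real.sqrt_mul (by positivity),
            Real.sqrt_sq (by positivity), mul_assoc]
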